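/- arXiv:1704.02154 — 2 statements merged into one kernel-verified Lean document; each statement's English description precedes it below -/
import Mathlib

section
/- If R(z) ∈ ℝ[z,z⁻¹]^{m×n} has full row normal rank m, then for every Borel probability measure P_e on (ℝᵐ)^ℤ there exists a unique Borel probability measure P on the quotient (ℝⁿ)^ℤ / ker∞R (with its quotient topology) such that the pushforward of P under the induced map R̄ : (ℝⁿ)^ℤ / ker∞R → (ℝᵐ)^ℤ, sending the coset of w to R(σ)w, equals P_e. -/
/-- The shift operator `R(σ)` associated with a Laurent polynomial matrix
`R ∈ ℝ[z,z⁻¹]^{m×n}`, bundled as an ℝ-linear map: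
`(R(σ)w)(t)ᵢ = Σⱼ Σ_k coeff_k(Rᵢⱼ) · w(t+k)ⱼ`. -/
noncomputable def shiftOpL {p n : ℕ} (R : Matrix (Fin p) (Fin n) (LaurentPolynomial ℝ)) :
    (ℤ → Fin n → ℝ) →ₗ[ℝ] (ℤ → Fin p → ℝ) where
  toFun w := fun t i => ∑ j, Finsupp.sum (R i j).coeff fun k c => c * w (t + k) j
  map_add' w w' := by
    funext t i
    simp only [Pi.add_apply, mul_add]
    rw [← Finset.sum_add_distrib]
    exact Finset.sum_congr rfl fun j _ => Finsupp.sum_add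
  map_smul' a w := by
    funext t i
    simp only [Pi.smul_apply, smul_eq_mul, RingHom.id_apply]
    rw [Finset.mul_sum]
    refine Finset.sum_congr rfl fun j _ => ?_
    rw [Finsupp.mul_sum]
    exact Finsupp.sum_congr fun k _ => by ring

/-- The normal rank of a Laurent polynomial matrix: its rank as a matrix over the field of
fractions of `ℝ[z,z⁻¹]`. -/
noncomputable def normalRank {m : Type*} [Fintype m] {n : ℕ}
    (R : Matrix m (Fin n) (LaurentPolynomial ℝ)) : ℕ :=
  Matrix.rank (R.map (algebraMap (LaurentPolynomial ℝ) (FractionRing (LaurentPolynomial ℝ))))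

/-! ### Auxiliary development -/

open Finsupp LaurentPolynomial Polynomial

section Phi

variable (K : Type*) [Field K]

/-- Shift by `k` as a linear endomorphism of bi-infinite sequences. -/
noncomputable def shiftEndo : Multiplicative ℤ →* Module.End K (ℤ → K) where
  toFun k :=
    { toFun := fun u t => u (t + k.toAdd)
      map_add' := fun u v => rfl
      map_smul' := fun c u => rfl }
  map_one' := by ext u t; simp
  map_mul' k l := by ext u t; simp [Module.End.mul_apply, add_assoc]

/-- The action of a Laurent polynomial as a shift operator on bi-infinite sequences. -/
noncomputable def phiOp : LaurentPolynomial K →ₐ[K] Module.End K (ℤ → K) :=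
  AddMonoidAlgebra.lift K _ ℤ (shiftEndo K)

variable {K}

theorem phiOp_apply (p : LaurentPolynomial K) (u : ℤ → K) (t : ℤ) :
    phiOp K p u t = p.coeff.sum fun k c => c * u (t + k) := by
  rw [phiOp, AddMonoidAlgebra.lift_apply]
  simp only [Finsupp.sum, LinearMap.coe_sum, Finset.sum_apply, LinearMap.smul_apply]
  rfl

theorem phiOp_single (k : ℤ) (c : K) (u : ℤ → K) (t : ℤ) :
    phiOp K (AddMonoidAlgebra.single k c) u t = c * u (t + k) := by
  rw [phiOp_apply, AddMonoidAlgebra.coeff_single, Finsupp.sum_single_index]; simp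

end Phi

/-- `q` has a continuous right inverse as a shift operator. -/
def HasCRI (q : LaurentPolynomial ℂ) : Prop :=
  ∃ ψ : (ℤ → ℂ) → (ℤ → ℂ), Continuous ψ ∧ ∀ e, phiOp ℂ q (ψ e) = e

theorem hasCRI_mul {q₁ q₂ : LaurentPolynomial ℂ} (h₁ : HasCRI q₁) (h₂ : HasCRI q₂) :
    HasCRI (q₁ * q₂) := by
  obtain ⟨ψ₁, hc₁, h₁⟩ := h₁
  obtain ⟨ψ₂, hc₂, h₂⟩ := h₂
  refine ⟨ψ₂ ∘ ψ₁, hc₂.comp hc₁, fun e => ?_⟩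
  rw [map_mul]
  show phiOp ℂ q₁ (phiOp ℂ q₂ (ψ₂ (ψ₁ e))) = e
  rw [h₂, h₁]

theorem hasCRI_single (k : ℤ) {c : ℂ} (hc : c ≠ 0) : HasCRI (AddMonoidAlgebra.single k c) := by
  refine ⟨fun e t => c⁻¹ * e (t - k), ?_, fun e => ?_⟩
  · exact continuous_pi fun t => continuous_const.mul (continuous_apply (t - k))
  · funext t
    rw [phiOp_single]
    simp [hc]

theorem hasCRI_one : HasCRI 1 := by
  have : (1 : LaurentPolynomial ℂ) = AddMonoidAlgebra.single 0 1 := rfl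
  rw [this]; exact hasCRI_single 0 one_ne_zero

/-- Forward solution of `u(t+1) - r u(t) = e(t)`. -/
noncomputable def solF (r : ℂ) (e : ℤ → ℂ) : ℕ → ℂ
  | 0 => 0
  | n + 1 => r * solF r e n + e n

/-- Backward solution of `u(t+1) - r u(t) = e(t)` (for `r ≠ 0`). -/
noncomputable def solG (r : ℂ) (e : ℤ → ℂ) : ℕ → ℂ
  | 0 => -e (-1) * r⁻¹
  | n + 1 => (solG r e n - e (Int.negSucc (n + 1))) * r⁻¹

/-- Two-sided solution of `u(t+1) - r u(t) = e(t)`. -/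
noncomputable def sol (r : ℂ) (e : ℤ → ℂ) : ℤ → ℂ
  | .ofNat n => solF r e n
  | .negSucc n => solG r e n

theorem continuous_solF (r : ℂ) (n : ℕ) : Continuous fun e => solF r e n := by
  induction n with
  | zero => exact continuous_const
  | succ n ih => exact (continuous_const.mul ih).add (continuous_apply _)

theorem continuous_solG (r : ℂ) (n : ℕ) : Continuous fun e => solG r e n := by
  induction n with
  | zero => exact ((continuous_apply _).neg).mul continuous_const
  | succ n ih => exact (ih.sub (continuous_apply _)).mul continuous_const

theorem sol_spec {r : ℂ} (hr : r ≠ 0) (e : ℤ → ℂ) (t : ℤ) :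
    sol r e (t + 1) - r * sol r e t = e t := by
  match t with
  | .ofNat n =>
    show solF r e (n + 1) - r * solF r e n = e n
    rw [solF]; ring
  | .negSucc 0 =>
    show solF r e 0 - r * solG r e 0 = e (-1)
    rw [solF, solG]; field_simp; ring
  | .negSucc (n + 1) =>
    show solG r e n - r * solG r e (n + 1) = e (Int.negSucc (n + 1))
    rw [solG]; field_simp; ring

theorem hasCRI_factor (r : ℂ) : HasCRI (toLaurent (X - Polynomial.C r)) := by
  have hphi : ∀ (u : ℤ → ℂ) (t : ℤ),
      phiOp ℂ (toLaurent (X - Polynomial.C r)) u t = u (t + 1) - r * u t := by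
    intro u t
    rw [show toLaurent (X - Polynomial.C r)
        = (AddMonoidAlgebra.single 1 1 : LaurentPolynomial ℂ) - AddMonoidAlgebra.single 0 r by
      rw [map_sub, Polynomial.toLaurent_X, Polynomial.toLaurent_C]; rfl]
    rw [map_sub]
    show phiOp ℂ (AddMonoidAlgebra.single 1 1) u t - phiOp ℂ (AddMonoidAlgebra.single 0 r) u t = _
    rw [phiOp_single, phiOp_single]
    simp
  by_cases hr : r = 0
  · subst hr
    refine ⟨fun e t => e (t - 1), continuous_pi fun t => continuous_apply _,
      fun e => funext fun t => ?_⟩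
    rw [hphi]; simp
  · refine ⟨fun e => sol r e, ?_, fun e => funext fun t => ?_⟩
    · refine continuous_pi fun t => ?_
      match t with
      | .ofNat n => exact continuous_solF r n
      | .negSucc n => exact continuous_solG r n
    · rw [hphi]; exact sol_spec hr e t

theorem hasCRI_of_ne_zero {q : LaurentPolynomial ℂ} (hq : q ≠ 0) : HasCRI q := by
  obtain ⟨nn, p, hp⟩ := q.exists_T_pow
  have hqe : q = toLaurent p * T (-nn : ℤ) := by
    rw [hp, mul_assoc, ← T_add]; simp
  have hp0 : p ≠ 0 := by
    rintro rfl
    rw [map_zero] at hp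
    exact hq ((mul_eq_zero.mp hp.symm).resolve_right (isUnit_T (nn : ℤ)).ne_zero)
  have hsp : p = Polynomial.C p.leadingCoeff
      * (p.roots.map fun a => X - Polynomial.C a).prod :=
    (IsAlgClosed.splits p).eq_prod_roots
  rw [hqe, hsp, map_mul, Polynomial.toLaurent_C, map_multiset_prod]
  refine hasCRI_mul (hasCRI_mul ?_ ?_) ?_
  · rw [LaurentPolynomial.C]
    exact hasCRI_single 0 (leadingCoeff_ne_zero.mpr hp0)
  · induction (p.roots) using Multiset.induction_on with
    | empty => simpa using hasCRI_one
    | cons r s ih =>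
      rw [Multiset.map_cons, Multiset.map_cons, Multiset.prod_cons]
      exact hasCRI_mul (hasCRI_factor r) ih
  · rw [LaurentPolynomial.T]
    exact hasCRI_single _ one_ne_zero

/-- A nonzero real Laurent polynomial has a continuous right inverse as a shift operator. -/
theorem exists_cont_right_inverse_real {d : LaurentPolynomial ℝ} (hd : d ≠ 0) :
    ∃ ψ : (ℤ → ℝ) → (ℤ → ℝ), Continuous ψ ∧ ∀ e, phiOp ℝ d (ψ e) = e := by
  have hdC : (AddMonoidAlgebra.ofCoeff (Finsupp.mapRange Complex.ofReal Complex.ofReal_zero d.coeff)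
      : LaurentPolynomial ℂ) ≠ 0 := by
    intro h
    apply hd
    ext k
    have := Finsupp.ext_iff.mp (AddMonoidAlgebra.ofCoeff_eq_zero.mp h) k
    simpa [Complex.ofReal_eq_zero] using this
  obtain ⟨ψC, hψCc, hψC⟩ := hasCRI_of_ne_zero hdC
  refine ⟨fun e t => (ψC (fun s => (e s : ℂ)) t).re, ?_, fun e => funext fun t => ?_⟩
  · refine continuous_pi fun t => Complex.continuous_re.comp ?_
    exact (continuous_apply t).comp (hψCc.comp
      (continuous_pi fun s => Complex.continuous_ofReal.comp (continuous_apply s)))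
  · have h := congrFun (hψC fun s => (e s : ℂ)) t
    rw [phiOp_apply, AddMonoidAlgebra.coeff_ofCoeff, Finsupp.sum_mapRange_index (by simp)] at h
    show phiOp ℝ d (fun t' => (ψC (fun s => (e s : ℂ)) t').re) t = e t
    rw [phiOp_apply]
    have h3 : (Finsupp.sum d.coeff fun k c => c * (ψC (fun s => (e s : ℂ)) (t + k)).re)
        = (Finsupp.sum d.coeff fun k c => (c : ℂ) * ψC (fun s => (e s : ℂ)) (t + k)).re := by
      rw [Finsupp.sum, Finsupp.sum, Complex.re_sum]
      exact Finset.sum_congr rfl fun k _ => by simp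
    rw [h3, h, Complex.ofReal_re]

/-- Existence of an adjugate-type right inverse with scalar denominator. -/
theorem exists_right_inverse_matrix {m n : ℕ} (R : Matrix (Fin m) (Fin n) (LaurentPolynomial ℝ))
    (hrk : normalRank R = m) :
    ∃ (S : Matrix (Fin n) (Fin m) (LaurentPolynomial ℝ)) (d : LaurentPolynomial ℝ),
      d ≠ 0 ∧ R * S = d • (1 : Matrix (Fin m) (Fin m) (LaurentPolynomial ℝ)) := by
  classical
  let A := LaurentPolynomial ℝ
  let K := FractionRing A
  let RK : Matrix (Fin m) (Fin n) K := R.map (algebraMap A K)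
  have hsurj : Function.Surjective RK.mulVecLin := by
    rw [← LinearMap.range_eq_top]
    have : Module.finrank K (LinearMap.range RK.mulVecLin) = Module.finrank K (Fin m → K) := by
      rw [Module.finrank_fin_fun]
      exact hrk
    exact Submodule.eq_top_of_finrank_eq this
  choose s hs using fun i => hsurj (Pi.single i 1)
  let SK : Matrix (Fin n) (Fin m) K := Matrix.of fun j i => s i j
  have hRKSK : RK * SK = 1 := by
    ext i' i
    have := congrFun (hs i) i'
    simpa [SK, Matrix.mul_apply, Matrix.mulVecLin_apply, Matrix.mulVec, dotProduct,
      Matrix.one_apply, Pi.single_apply, eq_comm] using this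
  obtain ⟨b, hb⟩ := IsLocalization.exist_integer_multiples_of_finset (nonZeroDivisors A)
    (Finset.univ.image fun ji : Fin n × Fin m => SK ji.1 ji.2)
  have hbmem : ∀ j i, IsLocalization.IsInteger A ((b : A) • SK j i) := by
    intro j i
    have := hb (SK j i) (Finset.mem_image.mpr ⟨(j, i), Finset.mem_univ _, rfl⟩)
    simpa [Submonoid.smul_def] using this
  choose S hS using fun ji : Fin n × Fin m => hbmem ji.1 ji.2
  refine ⟨Matrix.of fun j i => S (j, i), (b : A), nonZeroDivisors.coe_ne_zero b, ?_⟩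
  have hinj : Function.Injective (algebraMap A K) := IsFractionRing.injective A K
  refine Matrix.ext fun i j => hinj ?_
  have h1 : algebraMap A K ((R * Matrix.of fun j i => S (j, i)) i j)
      = algebraMap A K (b : A) * (RK * SK) i j := by
    simp only [Matrix.mul_apply, map_sum, map_mul]
    rw [Finset.mul_sum]
    refine Finset.sum_congr rfl fun l _ => ?_
    rw [show (Matrix.of fun j i => S (j, i)) l j = S (l, j) from rfl, hS (l, j),
      show (b : A) • SK l j = algebraMap A K (b : A) * SK l j
        from @Algebra.smul_def A K _ _ _ (↑b) (SK l j)]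
    simp only [RK, Matrix.map_apply]
    ring
  rw [h1, hRKSK]
  simp [Matrix.one_apply, Algebra.smul_def, Matrix.smul_apply, apply_ite (algebraMap A K)]

/-! ### Matrix shift operator lemmas -/

theorem shiftOpL_apply_phi {p n : ℕ} (R : Matrix (Fin p) (Fin n) (LaurentPolynomial ℝ))
    (w : ℤ → Fin n → ℝ) (t : ℤ) (i : Fin p) :
    shiftOpL R w t i = ∑ j, phiOp ℝ (R i j) (fun s => w s j) t := by
  show (∑ j, Finsupp.sum (R i j).coeff fun k c => c * w (t + k) j) = _
  refine Finset.sum_congr rfl fun j _ => ?_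
  rw [phiOp_apply]

theorem shiftOpL_continuous {p n : ℕ} (R : Matrix (Fin p) (Fin n) (LaurentPolynomial ℝ)) :
    Continuous (shiftOpL R) := by
  refine continuous_pi fun t => continuous_pi fun i => ?_
  show Continuous fun w : ℤ → Fin n → ℝ =>
    ∑ j, Finsupp.sum (R i j).coeff fun k c => c * w (t + k) j
  refine continuous_finset_sum _ fun j _ => ?_
  exact continuous_finset_sum _ fun k _ =>
    continuous_const.mul ((continuous_apply j).comp (continuous_apply (t + k)))

theorem shiftOpL_mul {p q n : ℕ} (A : Matrix (Fin p) (Fin q) (LaurentPolynomial ℝ))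
    (B : Matrix (Fin q) (Fin n) (LaurentPolynomial ℝ)) (w : ℤ → Fin n → ℝ) :
    shiftOpL (A * B) w = shiftOpL A (shiftOpL B w) := by
  funext t i
  rw [shiftOpL_apply_phi, shiftOpL_apply_phi]
  have hB : ∀ j : Fin q, (fun s => shiftOpL B w s j)
      = ∑ l, phiOp ℝ (B j l) fun s => w s l := by
    intro j
    funext s
    rw [shiftOpL_apply_phi]
    simp [Finset.sum_apply]
  simp only [Matrix.mul_apply, map_sum, map_mul, Module.End.mul_apply, LinearMap.coe_sum,
    Finset.sum_apply, hB]
  exact Finset.sum_comm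

theorem shiftOpL_smul_one {m : ℕ} (d : LaurentPolynomial ℝ) (v : ℤ → Fin m → ℝ) (t : ℤ)
    (i : Fin m) :
    shiftOpL (d • (1 : Matrix (Fin m) (Fin m) (LaurentPolynomial ℝ))) v t i
      = phiOp ℝ d (fun s => v s i) t := by
  rw [shiftOpL_apply_phi, Finset.sum_eq_single i]
  · simp [Matrix.smul_apply, Matrix.one_apply]
  · intro j _ hj
    have h0 : (d • (1 : Matrix (Fin m) (Fin m) (LaurentPolynomial ℝ))) i j = 0 := by
      simp [Matrix.smul_apply, Matrix.one_apply, Ne.symm hj]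
    rw [h0, map_zero]
    rfl
  · simp

/-- If `R(z) ∈ ℝ[z,z⁻¹]^{m×n}` has full row normal rank `m`, then for every
Borel probability measure `P_e` on `(ℝᵐ)^ℤ` there exists a unique Borel probability measure
`P` on the quotient `(ℝⁿ)^ℤ / ker∞R` (with its quotient topology) such that the pushforward
of `P` under the induced map `R̄ : (ℝⁿ)^ℤ / ker∞R → (ℝᵐ)^ℤ` (sending the coset of `w` to
`R(σ)w`) equals `P_e`. -/
theorem pushforward_probability_measure_exists_unique (m n : ℕ)
    (R : Matrix (Fin m) (Fin n) (LaurentPolynomial ℝ))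
    (hrk : normalRank R = m)
    (Rbar : ((ℤ → Fin n → ℝ) ⧸ LinearMap.ker (shiftOpL R)) → (ℤ → Fin m → ℝ))
    (hRbar : ∀ w : ℤ → Fin n → ℝ, Rbar (Submodule.Quotient.mk w) = shiftOpL R w)
    (Pe : @MeasureTheory.Measure (ℤ → Fin m → ℝ) (borel (ℤ → Fin m → ℝ)))
    (hPe : @MeasureTheory.IsProbabilityMeasure _ (borel (ℤ → Fin m → ℝ)) Pe) :
    ∃! P : @MeasureTheory.Measure ((ℤ → Fin n → ℝ) ⧸ LinearMap.ker (shiftOpL R))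
        (borel ((ℤ → Fin n → ℝ) ⧸ LinearMap.ker (shiftOpL R))),
      @MeasureTheory.IsProbabilityMeasure _
        (borel ((ℤ → Fin n → ℝ) ⧸ LinearMap.ker (shiftOpL R))) P ∧
      @MeasureTheory.Measure.map _ _
        (borel ((ℤ → Fin n → ℝ) ⧸ LinearMap.ker (shiftOpL R)))
        (borel (ℤ → Fin m → ℝ)) Rbar P = Pe := by
  classical
  obtain ⟨S, d, hd0, hRS⟩ := exists_right_inverse_matrix R hrk
  obtain ⟨ψ, hψc, hψ⟩ := exists_cont_right_inverse_real hd0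
  -- the continuous right inverse of the shift operator
  let g : (ℤ → Fin m → ℝ) → (ℤ → Fin n → ℝ) :=
    fun e => shiftOpL S fun t i => ψ (fun s => e s i) t
  have hgc : Continuous g := by
    refine (shiftOpL_continuous S).comp ?_
    refine continuous_pi fun t => continuous_pi fun i => ?_
    exact (continuous_apply t).comp (hψc.comp
      (continuous_pi fun s => (continuous_apply i).comp (continuous_apply s)))
  have hginv : ∀ e, shiftOpL R (g e) = e := by
    intro e
    show shiftOpL R (shiftOpL S _) = e
    rw [← shiftOpL_mul, hRS]
    funext t i
    rw [shiftOpL_smul_one]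
    rw [show (fun s => (fun t i => ψ (fun s' => e s' i) t) s i) = ψ fun s => e s i from rfl]
    rw [hψ]
  -- measurable structure
  letI mY : MeasurableSpace (ℤ → Fin m → ℝ) := borel _
  haveI hbY : BorelSpace (ℤ → Fin m → ℝ) := ⟨rfl⟩
  letI mQ : MeasurableSpace ((ℤ → Fin n → ℝ) ⧸ LinearMap.ker (shiftOpL R)) := borel _
  haveI hbQ : BorelSpace ((ℤ → Fin n → ℝ) ⧸ LinearMap.ker (shiftOpL R)) := ⟨rfl⟩
  have hRbarc : Continuous Rbar := by
    rw [isQuotientMap_quotient_mk'.continuous_iff]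
    convert shiftOpL_continuous R using 1
    funext w
    exact hRbar w
  let inv : (ℤ → Fin m → ℝ) → ((ℤ → Fin n → ℝ) ⧸ LinearMap.ker (shiftOpL R)) :=
    fun e => Submodule.Quotient.mk (g e)
  have hinvc : Continuous inv := continuous_quotient_mk'.comp hgc
  have h1 : ∀ e, Rbar (inv e) = e := fun e => (hRbar _).trans (hginv e)
  have h2 : ∀ q : ((ℤ → Fin n → ℝ) ⧸ LinearMap.ker (shiftOpL R)), inv (Rbar q) = q := by
    intro q
    obtain ⟨w, rfl⟩ := Submodule.Quotient.mk_surjective _ q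
    rw [hRbar]
    show Submodule.Quotient.mk (g (shiftOpL R w)) = Submodule.Quotient.mk w
    rw [Submodule.Quotient.eq, LinearMap.mem_ker, map_sub, hginv, sub_self]
  have hmR : Measurable Rbar := hRbarc.measurable
  have hmi : Measurable inv := hinvc.measurable
  refine ⟨Pe.map inv, ⟨?_, ?_⟩, ?_⟩
  · exact MeasureTheory.Measure.isProbabilityMeasure_map hmi.aemeasurable
  · rw [MeasureTheory.Measure.map_map hmR hmi]
    rw [show Rbar ∘ inv = id from funext h1, MeasureTheory.Measure.map_id]
  · rintro P' ⟨hP', hmap⟩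
    calc P' = P'.map id := (MeasureTheory.Measure.map_id).symm
      _ = P'.map (inv ∘ Rbar) := by rw [show inv ∘ Rbar = id from funext h2]
      _ = (P'.map Rbar).map inv := (MeasureTheory.Measure.map_map hmi hmR).symm
      _ = Pe.map inv := by rw [hmap]
end

section
/- Uniqueness of kernel representations: let R₁, R₂ ∈ ℝ[z,z⁻¹]^{m×n} be Laurent polynomial matrices, both of full row normal rank m. Then ker∞R₁ = ker∞R₂ if and only if there exists a Laurent unimodular matrix U ∈ ℝ[z,z⁻¹]^{m×m} (i.e. U invertible over ℝ[z,z⁻¹]) such that R₁ = U·R₂. -/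
/-- The shift operator `R(σ)` associated with a Laurent polynomial matrix
`R ∈ ℝ[z,z⁻¹]^{m×n}`: `(R(σ)w)(t)ᵢ = Σⱼ Σ_k coeff_k(Rᵢⱼ) · w(t+k)ⱼ`. -/
noncomputable def shiftOp {p n : ℕ} (R : Matrix (Fin p) (Fin n) (LaurentPolynomial ℝ))
    (w : ℤ → Fin n → ℝ) : ℤ → Fin p → ℝ :=
  fun t i => ∑ j, Finsupp.sum (R i j).coeff fun k c => c * w (t + k) j

section Auxiliary


noncomputable def sOp (p : LaurentPolynomial ℝ) (u : ℤ → ℝ) : ℤ → ℝ :=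
  fun t => p.coeff.sum fun k c => c * u (t + k)

lemma sOp_single (k : ℤ) (a : ℝ) (u : ℤ → ℝ) :
    sOp (AddMonoidAlgebra.single k a) u = fun t => a * u (t + k) := by
  funext t
  exact Finsupp.sum_single_index (by simp)

lemma sOp_add_left (p q : LaurentPolynomial ℝ) (u : ℤ → ℝ) :
    sOp (p + q) u = sOp p u + sOp q u := by
  funext t
  exact Finsupp.sum_add_index (by simp) (by intros; ring)

lemma sOp_add_right (p : LaurentPolynomial ℝ) (u v : ℤ → ℝ) :
    sOp p (u + v) = sOp p u + sOp p v := by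
  funext t
  simp [sOp, Finsupp.sum, mul_add, Finset.sum_add_distrib]

lemma sOp_zero_left (u : ℤ → ℝ) : sOp 0 u = 0 := by
  funext t; simp [sOp]

lemma sOp_zero_right (p : LaurentPolynomial ℝ) : sOp p 0 = 0 := by
  funext t; simp [sOp]

lemma sOp_one (u : ℤ → ℝ) : sOp 1 u = u := by
  have h : (1 : LaurentPolynomial ℝ) = AddMonoidAlgebra.single 0 1 := rfl
  funext t
  rw [h, sOp_single]
  simp

lemma sOp_single_mul (k : ℤ) (a : ℝ) (q : LaurentPolynomial ℝ) (u : ℤ → ℝ) :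
    sOp (AddMonoidAlgebra.single k a * q) u = sOp (AddMonoidAlgebra.single k a) (sOp q u) := by
  induction q using AddMonoidAlgebra.induction with
  | zero => simp [sOp_zero_left, sOp_zero_right]
  | single_add l b q' _ _ ihq =>
    rw [mul_add, sOp_add_left, sOp_add_left, sOp_add_right, ihq]
    congr 1
    have hmul : AddMonoidAlgebra.single (R := ℝ) k a * AddMonoidAlgebra.single l b
        = AddMonoidAlgebra.single (k + l) (a * b) := AddMonoidAlgebra.single_mul_single ..
    rw [hmul, sOp_single, sOp_single, sOp_single]
    funext t
    simp only []
    rw [add_assoc]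
    ring

lemma sOp_mul (p q : LaurentPolynomial ℝ) (u : ℤ → ℝ) :
    sOp (p * q) u = sOp p (sOp q u) := by
  induction p using AddMonoidAlgebra.induction with
  | zero => simp [sOp_zero_left]
  | single_add k a p _ _ ih =>
    rw [add_mul, sOp_add_left, sOp_add_left, ih, sOp_single_mul]

lemma sOp_apply (p : LaurentPolynomial ℝ) (u : ℤ → ℝ) (t : ℤ) :
    sOp p u t = p.coeff.sum fun k c => c * u (t + k) := rfl


noncomputable def fwdSol (N : ℕ) (c : ℕ → ℝ) (v : ℤ → ℝ) (a : ℕ → ℝ) (j : ℕ) : ℝ :=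
  if j < N then a j
  else (v ((j : ℤ) - N) - ∑ k : Fin N, c k * fwdSol N c v a (j - N + k)) / c N
termination_by j
decreasing_by rename_i h; have := k.isLt; omega

noncomputable def bwdSol (N : ℕ) (c : ℕ → ℝ) (v : ℤ → ℝ) (fw : ℕ → ℝ) (j : ℕ) : ℝ :=
  (v (-1 - (j : ℤ)) - ∑ k : Fin N, c (k + 1) *
      (if (k : ℕ) < j then bwdSol N c v fw (j - (k + 1)) else fw (k - j))) / c 0
termination_by j
decreasing_by rename_i h; omega

noncomputable def solSeq (N : ℕ) (c : ℕ → ℝ) (v : ℤ → ℝ) (a : ℕ → ℝ) : ℤ → ℝ :=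
  fun t => if 0 ≤ t then fwdSol N c v a t.toNat
    else bwdSol N c v (fwdSol N c v a) (-1 - t).toNat

lemma solSeq_init (N : ℕ) (c : ℕ → ℝ) (v : ℤ → ℝ) (a : ℕ → ℝ) (j : ℕ) (hj : j < N) :
    solSeq N c v a (j : ℤ) = a j := by
  rw [solSeq, if_pos (by positivity), Int.toNat_natCast, fwdSol, if_pos hj]

lemma solSeq_spec (N : ℕ) (c : ℕ → ℝ) (hcN : c N ≠ 0) (hc0 : c 0 ≠ 0)
    (v : ℤ → ℝ) (a : ℕ → ℝ) (t : ℤ) :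
    ∑ k ∈ Finset.range (N + 1), c k * solSeq N c v a (t + k) = v t := by
  rcases le_or_gt 0 t with ht | ht
  · -- forward case
    have hw : ∀ k : ℕ, solSeq N c v a (t + k) = fwdSol N c v a (t.toNat + k) := by
      intro k
      rw [solSeq, if_pos (by omega)]
      congr 1
      omega
    rw [Finset.sum_range_succ]
    have hunf : fwdSol N c v a (t.toNat + N) =
        (v t - ∑ k : Fin N, c k * fwdSol N c v a (t.toNat + k)) / c N := by
      rw [fwdSol, if_neg (by omega)]
      congr 2
      · congr 1
        omega
      · apply Finset.sum_congr rfl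
        intro k _
        congr 2
        omega
    rw [hw N, hunf]
    have : ∑ k ∈ Finset.range N, c k * solSeq N c v a (t + k)
        = ∑ k : Fin N, c k * fwdSol N c v a (t.toNat + k) := by
      rw [Fin.sum_univ_eq_sum_range (fun k => c k * fwdSol N c v a (t.toNat + k)) N]
      exact Finset.sum_congr rfl fun k _ => by rw [hw k]
    rw [this, mul_comm (c N), div_mul_cancel₀ _ hcN]
    ring
  · -- backward case
    set j : ℕ := (-1 - t).toNat with hjdef
    have hjt : (j : ℤ) = -1 - t := by omega
    have hwt : solSeq N c v a t = bwdSol N c v (fwdSol N c v a) j := by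
      rw [solSeq, if_neg (by omega)]
    have hunf : bwdSol N c v (fwdSol N c v a) j =
        (v t - ∑ k : Fin N, c (k + 1) *
          (if (k : ℕ) < j then bwdSol N c v (fwdSol N c v a) (j - (k + 1))
            else fwdSol N c v a (k - j))) / c 0 := by
      rw [bwdSol]
      congr 2
      rw [hjt]
      ring_nf
    have hterm : ∀ k : ℕ, k < N → solSeq N c v a (t + (k + 1)) =
        (if (k : ℕ) < j then bwdSol N c v (fwdSol N c v a) (j - (k + 1))
          else fwdSol N c v a (k - j)) := by
      intro k _
      by_cases hk : k < j
      · rw [if_pos hk, solSeq, if_neg (by omega)]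
        congr 1
        omega
      · rw [if_neg hk, solSeq, if_pos (by omega)]
        congr 1
        omega
    rw [Finset.sum_range_succ']
    push_cast
    simp only [add_zero]
    have : ∑ k ∈ Finset.range N, c (k + 1) * solSeq N c v a (t + (k + 1))
        = ∑ k : Fin N, c (k + 1) *
          (if (k : ℕ) < j then bwdSol N c v (fwdSol N c v a) (j - (k + 1))
            else fwdSol N c v a (k - j)) := by
      rw [Fin.sum_univ_eq_sum_range (fun k => c (k + 1) *
          (if k < j then bwdSol N c v (fwdSol N c v a) (j - (k + 1))
            else fwdSol N c v a (k - j))) N]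
      refine Finset.sum_congr rfl fun k hk => ?_
      rw [hterm k (Finset.mem_range.mp hk)]
    rw [this, hwt, hunf, mul_comm (c 0), div_mul_cancel₀ _ hc0]
    ring

lemma sOp_window (p : LaurentPolynomial ℝ) (ℓ L : ℤ)
    (hl : ∀ k ∈ p.coeff.support, ℓ ≤ k) (hL : ∀ k ∈ p.coeff.support, k ≤ L) (hdl : ℓ ≤ L)
    (u : ℤ → ℝ) (t : ℤ) :
    sOp p u t = ∑ k ∈ Finset.range ((L - ℓ).toNat + 1), p.coeff (ℓ + k) * u (t + ℓ + k) := by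
  rw [sOp_apply, Finsupp.sum]
  rw [Finset.sum_subset (Finset.subset_iff.mpr fun {k} hk =>
    Finset.mem_Icc.mpr ⟨hl k hk, hL k hk⟩)
    (fun k _ hk => by rw [Finsupp.notMem_support_iff.mp hk, zero_mul])]
  refine Finset.sum_bij' (fun k _ => (k - ℓ).toNat) (fun i _ => ℓ + i) ?_ ?_ ?_ ?_ ?_
  · intro k hk
    rw [Finset.mem_Icc] at hk
    rw [Finset.mem_range]
    omega
  · intro i hi
    rw [Finset.mem_range] at hi
    rw [Finset.mem_Icc]
    omega
  · intro k hk
    rw [Finset.mem_Icc] at hk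
    omega
  · intro i hi
    rw [Finset.mem_range] at hi
    omega
  · intro k hk
    rw [Finset.mem_Icc] at hk
    have h1 : ℓ + (((k - ℓ).toNat : ℕ) : ℤ) = k := by omega
    have h2 : t + ℓ + (((k - ℓ).toNat : ℕ) : ℤ) = t + k := by omega
    rw [h1, h2]

lemma sOp_surjective (p : LaurentPolynomial ℝ) (hp : p ≠ 0) : Function.Surjective (sOp p) := by
  intro v
  have hne : p.coeff.support.Nonempty := Finsupp.support_nonempty_iff.mpr (mt AddMonoidAlgebra.coeff_eq_zero.mp hp)
  set ℓ := p.coeff.support.min' hne with hldef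
  set L := p.coeff.support.max' hne with hLdef
  have hdl : ℓ ≤ L := Finset.min'_le _ _ (p.coeff.support.max'_mem hne)
  set N := (L - ℓ).toNat with hNdef
  set c : ℕ → ℝ := fun k => p.coeff (ℓ + k) with hcdef
  have hc : ∀ k : ℕ, p.coeff (ℓ + (k : ℤ)) = c k := fun _ => rfl
  have hc0 : c 0 ≠ 0 := by
    have := Finsupp.mem_support_iff.mp (p.coeff.support.min'_mem hne)
    simpa [hcdef] using this
  have hcN : c N ≠ 0 := by
    have hmem := Finsupp.mem_support_iff.mp (p.coeff.support.max'_mem hne)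
    have hlN : ℓ + (N : ℤ) = L := by omega
    simpa [hcdef, hlN] using hmem
  refine ⟨solSeq N c (fun s => v (s - ℓ)) 0, ?_⟩
  funext t
  rw [sOp_window p ℓ L (fun k hk => Finset.min'_le _ _ hk) (fun k hk => Finset.le_max' _ _ hk)
    hdl]
  simp only [hc]
  have := solSeq_spec N c hcN hc0 (fun s => v (s - ℓ)) 0 (t + ℓ)
  simpa using this

lemma exists_sOp_ker (p : LaurentPolynomial ℝ) (hp : ¬ IsUnit p) :
    ∃ u : ℤ → ℝ, u ≠ 0 ∧ sOp p u = 0 := by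
  by_cases h0 : p = 0
  · refine ⟨fun _ => 1, ?_, by rw [h0, sOp_zero_left]⟩
    intro h
    simpa using congrFun h 0
  · have hne : p.coeff.support.Nonempty := Finsupp.support_nonempty_iff.mpr (mt AddMonoidAlgebra.coeff_eq_zero.mp h0)
    set ℓ := p.coeff.support.min' hne with hldef
    set L := p.coeff.support.max' hne with hLdef
    have hdl : ℓ ≤ L := Finset.min'_le _ _ (p.coeff.support.max'_mem hne)
    set N := (L - ℓ).toNat with hNdef
    set c : ℕ → ℝ := fun k => p.coeff (ℓ + k) with hcdef
    have hc : ∀ k : ℕ, p.coeff (ℓ + (k : ℤ)) = c k := fun _ => rfl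
    have hc0 : c 0 ≠ 0 := by
      have := Finsupp.mem_support_iff.mp (p.coeff.support.min'_mem hne)
      simpa [hcdef] using this
    have hcN : c N ≠ 0 := by
      have hmem := Finsupp.mem_support_iff.mp (p.coeff.support.max'_mem hne)
      have hlN : ℓ + (N : ℤ) = L := by omega
      simpa [hcdef, hlN] using hmem
    have hN : 0 < N := by
      by_contra hNN
      have hLl : L = ℓ := by omega
      have hsub : p.coeff.support ⊆ {ℓ} := by
        intro k hk
        have h1 := Finset.min'_le _ _ hk
        have h2 := Finset.le_max' _ _ hk
        rw [Finset.mem_singleton]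
        omega
      have hps : p = AddMonoidAlgebra.single ℓ (p.coeff ℓ) :=
          AddMonoidAlgebra.coeff_injective (Finsupp.support_subset_singleton.mp hsub)
      apply hp
      rw [hps]
      apply IsUnit.of_mul_eq_one (AddMonoidAlgebra.single (-ℓ) (p.coeff ℓ)⁻¹)
      have : (AddMonoidAlgebra.single ℓ (p.coeff ℓ) : LaurentPolynomial ℝ) = AddMonoidAlgebra.single ℓ (p.coeff ℓ) :=
        rfl
      rw [this, AddMonoidAlgebra.single_mul_single, add_neg_cancel,
        mul_inv_cancel₀ (Finsupp.mem_support_iff.mp (hldef ▸ p.coeff.support.min'_mem hne))]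
      rfl
    set a : ℕ → ℝ := fun j => if j = 0 then 1 else 0 with hadef
    refine ⟨solSeq N c 0 a, ?_, ?_⟩
    · intro h
      have h00 := congrFun h (0 : ℤ)
      have : solSeq N c 0 a ((0 : ℕ) : ℤ) = a 0 := solSeq_init N c 0 a 0 hN
      rw [Nat.cast_zero] at this
      rw [this] at h00
      simp [hadef] at h00
    · funext t
      rw [sOp_window p ℓ L (fun k hk => Finset.min'_le _ _ hk)
        (fun k hk => Finset.le_max' _ _ hk) hdl]
      simp only [hc]
      have := solSeq_spec N c hcN hc0 0 a (t + ℓ)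
      simpa using this

noncomputable instance laurentSMul : SMul (LaurentPolynomial ℝ) (ℤ → ℝ) := ⟨sOp⟩

lemma laurent_smul_def (p : LaurentPolynomial ℝ) (u : ℤ → ℝ) : p • u = sOp p u := rfl

noncomputable instance laurentModule : Module (LaurentPolynomial ℝ) (ℤ → ℝ) where
  one_smul := sOp_one
  mul_smul := sOp_mul
  smul_zero := sOp_zero_right
  smul_add := sOp_add_right
  add_smul := sOp_add_left
  zero_smul := sOp_zero_left

open LaurentPolynomial in
instance : IsPrincipalIdealRing (LaurentPolynomial ℝ) := by
  constructor
  intro I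
  set J : Ideal (Polynomial ℝ) := I.comap (Polynomial.toLaurent (R := ℝ)) with hJ
  obtain ⟨g, hg⟩ := Submodule.IsPrincipal.principal J
  rw [Ideal.submodule_span_eq] at hg
  refine ⟨Polynomial.toLaurent g, le_antisymm ?_ ?_⟩
  · intro x hx
    obtain ⟨n, f', hf'⟩ := x.exists_T_pow
    have hmem : f' ∈ J := by
      simpa [hJ, Ideal.mem_comap, hf'] using I.mul_mem_right (T n) hx
    rw [hg, Ideal.mem_span_singleton] at hmem
    obtain ⟨c, hc⟩ := hmem
    rw [Ideal.submodule_span_eq, Ideal.mem_span_singleton]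
    refine ⟨Polynomial.toLaurent c * T (-n : ℤ), ?_⟩
    have h1 : x * T (n : ℤ) * T (-n : ℤ) = x := by
      rw [mul_assoc, ← T_add]
      simp
    rw [← h1, ← hf', hc]
    push_cast [map_mul]
    ring
  · rw [Ideal.submodule_span_eq, Ideal.span_le, Set.singleton_subset_iff]
    have : g ∈ J := hg ▸ Ideal.subset_span rfl
    simpa [hJ, Ideal.mem_comap] using this

lemma baerW : Module.Baer (LaurentPolynomial ℝ) (ℤ → ℝ) := by
  intro I g
  obtain ⟨d, hd⟩ := Submodule.IsPrincipal.principal I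
  rw [Ideal.submodule_span_eq] at hd
  by_cases h0 : d = 0
  · refine ⟨0, fun x mem => ?_⟩
    have hx : x = 0 := by
      rw [hd, h0, Ideal.span_singleton_eq_bot.mpr rfl] at mem
      simpa using mem
    have : (⟨x, mem⟩ : I) = 0 := Subtype.ext hx
    rw [this, map_zero]
    simp
  · have memd : d ∈ I := hd ▸ Ideal.subset_span rfl
    obtain ⟨u', hu'⟩ := sOp_surjective d h0 (g ⟨d, memd⟩)
    refine ⟨LinearMap.toSpanSingleton (LaurentPolynomial ℝ) (ℤ → ℝ) u', fun x mem => ?_⟩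
    have : x ∈ Ideal.span {d} := hd ▸ mem
    obtain ⟨c, hc⟩ := Ideal.mem_span_singleton'.mp this
    have hsm : (⟨x, mem⟩ : I) = c • ⟨d, memd⟩ := Subtype.ext (by simp [← hc, smul_eq_mul])
    rw [hsm, map_smul, LinearMap.toSpanSingleton_apply, ← hc]
    rw [laurent_smul_def, laurent_smul_def, sOp_mul, hu']

lemma sOp_sum_right (p : LaurentPolynomial ℝ) {ι : Type*} (s : Finset ι) (f : ι → (ℤ → ℝ)) :
    sOp p (∑ j ∈ s, f j) = ∑ j ∈ s, sOp p (f j) := by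
  classical
  induction s using Finset.induction with
  | empty => simp [sOp_zero_right]
  | insert _ _ h ih => rw [Finset.sum_insert h, Finset.sum_insert h, sOp_add_right, ih]

/-- the pairing between a sequence and a row vector of Laurent polynomials -/
noncomputable def pairW {n : ℕ} (w : ℤ → Fin n → ℝ) :
    (Fin n → LaurentPolynomial ℝ) →ₗ[LaurentPolynomial ℝ] (ℤ → ℝ) where
  toFun ρ := ∑ j, sOp (ρ j) (fun t => w t j)
  map_add' ρ ρ' := by
    simp only [Pi.add_apply, sOp_add_left]
    exact Finset.sum_add_distrib
  map_smul' c ρ := by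
    simp only [Pi.smul_apply, smul_eq_mul, RingHom.id_apply, laurent_smul_def, sOp_mul,
      sOp_sum_right]

/-- key lemma: if every behavior trajectory annihilated by `M` is annihilated by `r`,
then `r` lies in `M`. -/
lemma mem_of_behavior {n : ℕ} (M : Submodule (LaurentPolynomial ℝ) (Fin n → LaurentPolynomial ℝ))
    (r : Fin n → LaurentPolynomial ℝ)
    (h : ∀ w : ℤ → Fin n → ℝ, (∀ ρ ∈ M, pairW w ρ = 0) → pairW w r = 0) : r ∈ M := by
  classical
  by_contra hr
  set rb : (Fin n → LaurentPolynomial ℝ) ⧸ M := Submodule.Quotient.mk r with hrb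
  have hrb0 : rb ≠ 0 := fun h0 => hr ((Submodule.Quotient.mk_eq_zero M).mp h0)
  set t : LaurentPolynomial ℝ →ₗ[LaurentPolynomial ℝ] ((Fin n → LaurentPolynomial ℝ) ⧸ M) :=
    LinearMap.toSpanSingleton (LaurentPolynomial ℝ) _ rb with ht
  set I : Ideal (LaurentPolynomial ℝ) := LinearMap.ker t with hI
  obtain ⟨d, hd⟩ := Submodule.IsPrincipal.principal I
  rw [Ideal.submodule_span_eq] at hd
  have hdnu : ¬ IsUnit d := by
    intro hu
    have h1 : (1 : LaurentPolynomial ℝ) ∈ I := by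
      rw [hd, Ideal.span_singleton_eq_top.mpr hu]; trivial
    have h2 : t 1 = 0 := h1
    rw [ht, LinearMap.toSpanSingleton_apply_one] at h2
    exact hrb0 h2
  obtain ⟨u, hu0, hu⟩ := exists_sOp_ker d hdnu
  have hker : I ≤ LinearMap.ker (LinearMap.toSpanSingleton (LaurentPolynomial ℝ) (ℤ → ℝ) u) := by
    intro x hx
    rw [hd, Ideal.mem_span_singleton] at hx
    obtain ⟨c, hc⟩ := hx
    simp only [LinearMap.mem_ker, LinearMap.toSpanSingleton_apply]
    rw [hc, mul_comm, laurent_smul_def, sOp_mul, hu, sOp_zero_right]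
  set gbar := Submodule.liftQ I (LinearMap.toSpanSingleton (LaurentPolynomial ℝ) (ℤ → ℝ) u) hker
    with hgbar
  set e := t.quotKerEquivRange with he
  set g : LinearMap.range t →ₗ[LaurentPolynomial ℝ] (ℤ → ℝ) :=
    gbar.comp (e.symm : _ →ₗ[LaurentPolynomial ℝ] _) with hg
  obtain ⟨f, hf⟩ := (baerW.injective).out (LinearMap.range t).subtype Subtype.coe_injective g
  set w : ℤ → Fin n → ℝ := fun tt j => f (Submodule.Quotient.mk (Pi.single j 1)) tt with hw
  have hpair : ∀ ρ : Fin n → LaurentPolynomial ℝ, pairW w ρ = f (Submodule.Quotient.mk ρ) := by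
    intro ρ
    have hρ : ∑ j, ρ j • (Pi.single j (1 : LaurentPolynomial ℝ)) = ρ := by
      funext j
      simp [Pi.single_apply, Finset.sum_apply]
    calc pairW w ρ = ∑ j, ρ j • f (Submodule.Quotient.mk (Pi.single j (1:LaurentPolynomial ℝ))) :=
        rfl
      _ = ∑ j, f (ρ j • Submodule.Quotient.mk (Pi.single j (1:LaurentPolynomial ℝ))) := by
          simp only [map_smul]
      _ = f (Submodule.Quotient.mk ρ) := by
          rw [← map_sum]
          congr 1
          simp only [← Submodule.mkQ_apply, ← map_smul, ← map_sum]
          rw [hρ]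
  have hann : ∀ ρ ∈ M, pairW w ρ = 0 := by
    intro ρ hρm
    rw [hpair, (Submodule.Quotient.mk_eq_zero M).mpr hρm, map_zero]
  have hzero : pairW w r = 0 := h w hann
  rw [hpair] at hzero
  have hmem : rb ∈ LinearMap.range t :=
    ⟨1, LinearMap.toSpanSingleton_apply_one (LaurentPolynomial ℝ) _ rb⟩
  have hfr : f rb = u := by
    have h2 : f rb = g ⟨rb, hmem⟩ := hf ⟨rb, hmem⟩
    have h3 : (e (Submodule.Quotient.mk 1) : (Fin n → LaurentPolynomial ℝ) ⧸ M) = rb := by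
      rw [he, LinearMap.quotKerEquivRange_apply_mk, ht, LinearMap.toSpanSingleton_apply_one]
    have h4 : e.symm ⟨rb, hmem⟩ = Submodule.Quotient.mk 1 := by
      rw [LinearEquiv.symm_apply_eq]
      exact Subtype.ext h3.symm
    rw [h2, hg]
    simp only [LinearMap.comp_apply, LinearEquiv.coe_coe, h4]
    rw [hgbar, Submodule.liftQ_apply, LinearMap.toSpanSingleton_apply_one]
  rw [hrb] at hfr
  rw [hfr] at hzero
  exact hu0 hzero

end Auxiliary

-- relation between shiftOp and pairW
lemma shiftOp_eq_pairW {p n : ℕ} (R : Matrix (Fin p) (Fin n) (LaurentPolynomial ℝ))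
    (w : ℤ → Fin n → ℝ) (t : ℤ) (i : Fin p) :
    shiftOp R w t i = pairW w (R i) t := by
  simp only [shiftOp, pairW, LinearMap.coe_mk, AddHom.coe_mk, Finset.sum_apply, sOp_apply]

lemma shiftOp_zero_right {p n : ℕ} (R : Matrix (Fin p) (Fin n) (LaurentPolynomial ℝ)) :
    shiftOp R (0 : ℤ → Fin n → ℝ) = 0 := by
  funext t i
  simp [shiftOp]

lemma shiftOp_mul {p q n : ℕ} (A : Matrix (Fin p) (Fin q) (LaurentPolynomial ℝ))
    (B : Matrix (Fin q) (Fin n) (LaurentPolynomial ℝ)) (w : ℤ → Fin n → ℝ) :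
    shiftOp (A * B) w = shiftOp A (shiftOp B w) := by
  funext t i
  have hcol : ∀ l : Fin q, (fun s => shiftOp B w s l) = ∑ j, sOp (B l j) (fun s => w s j) := by
    intro l
    funext s
    rw [Finset.sum_apply]
    simp only [shiftOp, sOp_apply]
  calc shiftOp (A * B) w t i
      = ∑ j, sOp ((A * B) i j) (fun s => w s j) t := by
        simp only [shiftOp, sOp_apply, Finset.sum_apply]
    _ = ∑ j, sOp (∑ l, A i l * B l j) (fun s => w s j) t := by
        simp only [Matrix.mul_apply]
    _ = ∑ j, ∑ l, sOp (A i l * B l j) (fun s => w s j) t := by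
        apply Finset.sum_congr rfl
        intro j _
        induction (Finset.univ : Finset (Fin q)) using Finset.induction with
        | empty => simp [sOp_zero_left]
        | insert _ _ hnotmem ih =>
            rw [Finset.sum_insert hnotmem, sOp_add_left, Finset.sum_insert hnotmem, Pi.add_apply,
              ih]
    _ = ∑ l, ∑ j, sOp (A i l) (sOp (B l j) (fun s => w s j)) t := by
        rw [Finset.sum_comm]
        simp only [sOp_mul]
    _ = ∑ l, sOp (A i l) (fun s => shiftOp B w s l) t := by
        apply Finset.sum_congr rfl
        intro l _
        rw [hcol l, sOp_sum_right, Finset.sum_apply]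
    _ = shiftOp A (shiftOp B w) t i := by
        simp only [shiftOp, sOp_apply, Finset.sum_apply]

-- cancellation using full normal rank
set_option maxHeartbeats 1000000 in
set_option synthInstance.maxHeartbeats 400000 in
lemma cancel_of_full_rank {m n : ℕ} (R : Matrix (Fin m) (Fin n) (LaurentPolynomial ℝ))
    (h : normalRank R = m) (Z : Matrix (Fin m) (Fin m) (LaurentPolynomial ℝ))
    (hZ : Z * R = 0) : Z = 0 := by
  classical
  set K := FractionRing (LaurentPolynomial ℝ)
  set φ := algebraMap (LaurentPolynomial ℝ) K
  have hφ : Function.Injective φ := IsFractionRing.injective _ _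
  set Rk := R.map φ with hRk
  set Zk := Z.map φ with hZk
  have hZRk : Zk * Rk = 0 := by
    rw [hZk, hRk, ← Matrix.map_mul, hZ]
    funext i j
    simp [Matrix.map_apply]
  -- transpose linear map
  have hrange : Module.finrank K (LinearMap.range (Rk.transpose.mulVecLin)) = m := by
    have h1 : Rk.transpose.rank = Rk.rank := Matrix.rank_transpose Rk
    have h2 : Rk.rank = m := h
    rw [Matrix.rank] at h1
    rw [h1, h2]
  have hker : LinearMap.ker (Rk.transpose.mulVecLin) = ⊥ := by
    have h3 := LinearMap.finrank_range_add_finrank_ker (Rk.transpose.mulVecLin)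
    rw [hrange] at h3
    have h4 : Module.finrank K (Fin m → K) = m := by simp
    rw [h4] at h3
    have h5 : Module.finrank K (LinearMap.ker (Rk.transpose.mulVecLin)) = 0 := by omega
    exact Submodule.finrank_eq_zero.mp h5
  have hrows : ∀ i, Zk i = 0 := by
    intro i
    have hmem : Zk i ∈ LinearMap.ker (Rk.transpose.mulVecLin) := by
      rw [LinearMap.mem_ker, Matrix.mulVecLin_apply, Matrix.mulVec_transpose]
      funext j
      have := congrFun (congrFun hZRk i) j
      simpa [Matrix.mul_apply, Matrix.vecMul, dotProduct] using this
    rw [hker] at hmem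
    simpa using hmem
  funext i j
  apply hφ
  have := congrFun (hrows i) j
  simpa [hZk, Matrix.map_apply] using this

/-- uniqueness of kernel representations: let `R₁, R₂ ∈ ℝ[z,z⁻¹]^{m×n}` be
Laurent polynomial matrices, both of full row normal rank `m`. Then `ker∞R₁ = ker∞R₂` if and
only if there exists a Laurent unimodular matrix `U ∈ ℝ[z,z⁻¹]^{m×m}` (i.e. `U` a unit of the
matrix ring over `ℝ[z,z⁻¹]`) such that `R₁ = U·R₂`. -/
theorem kernel_representation_unique_up_to_unimodular (m n : ℕ)
    (R₁ R₂ : Matrix (Fin m) (Fin n) (LaurentPolynomial ℝ))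
    (h₁ : normalRank R₁ = m) (h₂ : normalRank R₂ = m) :
    {w : ℤ → Fin n → ℝ | shiftOp R₁ w = 0} = {w : ℤ → Fin n → ℝ | shiftOp R₂ w = 0} ↔
      ∃ U : Matrix (Fin m) (Fin m) (LaurentPolynomial ℝ), IsUnit U ∧ R₁ = U * R₂ := by
  constructor
  · intro hbeh
    -- rows of R₂ are in the row module of R₁ and vice versa
    have hmem : ∀ (S T : Matrix (Fin m) (Fin n) (LaurentPolynomial ℝ)),
        {w : ℤ → Fin n → ℝ | shiftOp S w = 0} = {w : ℤ → Fin n → ℝ | shiftOp T w = 0} →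
        ∀ i : Fin m, T i ∈ Submodule.span (LaurentPolynomial ℝ) (Set.range fun i' => S i') := by
      intro S T hST i
      apply mem_of_behavior
      intro w hw
      have hS : shiftOp S w = 0 := by
        funext t i'
        rw [shiftOp_eq_pairW]
        rw [hw (S i') (Submodule.subset_span ⟨i', rfl⟩)]
        rfl
      have hT : shiftOp T w = 0 := by
        have : w ∈ {w : ℤ → Fin n → ℝ | shiftOp S w = 0} := hS
        rw [hST] at this
        exact this
      funext t
      rw [← shiftOp_eq_pairW T w t i, hT]
      rfl
    have hX : ∃ X : Matrix (Fin m) (Fin m) (LaurentPolynomial ℝ), X * R₁ = R₂ := by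
      have h := hmem R₁ R₂ hbeh
      choose X hXc using fun i => (Submodule.mem_span_range_iff_exists_fun _).mp (h i)
      refine ⟨Matrix.of X, ?_⟩
      funext i j
      have := congrFun (hXc i) j
      simpa [Matrix.mul_apply, Finset.sum_apply] using this
    have hY : ∃ Y : Matrix (Fin m) (Fin m) (LaurentPolynomial ℝ), Y * R₂ = R₁ := by
      have h := hmem R₂ R₁ hbeh.symm
      choose Y hYc using fun i => (Submodule.mem_span_range_iff_exists_fun _).mp (h i)
      refine ⟨Matrix.of Y, ?_⟩
      funext i j
      have := congrFun (hYc i) j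
      simpa [Matrix.mul_apply, Finset.sum_apply] using this
    obtain ⟨X, hXe⟩ := hX
    obtain ⟨Y, hYe⟩ := hY
    have hYX : Y * X = 1 := by
      have : (Y * X - 1) * R₁ = 0 := by
        rw [Matrix.sub_mul, Matrix.one_mul, Matrix.mul_assoc, hXe, hYe, sub_self]
      have := cancel_of_full_rank R₁ h₁ _ this
      rwa [sub_eq_zero] at this
    have hXY : X * Y = 1 := by
      have : (X * Y - 1) * R₂ = 0 := by
        rw [Matrix.sub_mul, Matrix.one_mul, Matrix.mul_assoc, hYe, hXe, sub_self]
      have := cancel_of_full_rank R₂ h₂ _ this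
      rwa [sub_eq_zero] at this
    exact ⟨Y, ⟨⟨Y, X, hYX, hXY⟩, rfl⟩, hYe.symm⟩
  · rintro ⟨U, hU, rfl⟩
    ext w
    simp only [Set.mem_setOf_eq]
    constructor
    · intro h1
      obtain ⟨V, hVU, hUV⟩ : ∃ V, V * U = 1 ∧ U * V = 1 := by
        obtain ⟨u, rfl⟩ := hU
        exact ⟨(u⁻¹ : _), by simp [Units.inv_mul], by simp [Units.mul_inv]⟩
      have hR2 : (R₂ : Matrix (Fin m) (Fin n) (LaurentPolynomial ℝ)) = V * (U * R₂) := by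
        rw [← Matrix.mul_assoc, hVU, Matrix.one_mul]
      rw [hR2, shiftOp_mul, h1, shiftOp_zero_right]
    · intro h2
      rw [shiftOp_mul, h2, shiftOp_zero_right]
end
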